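/- Let ξ : ℝ → ℝ and let ξ̄ : ℝ → ℝ be Lipschitz continuous, nondecreasing, bounded from below, convex, and equal to ξ on [0,1]. Then for every μ ∈ C satisfying 0 ≤ μ ≤ 1 almost everywhere, 𝖧(μ) = ∫₀¹ ξ( μ(s) ) ds. -/

import Mathlib

open MeasureTheory

/-- Lebesgue measure restricted to `[0,1)`. -/
noncomputable def mu0 : Measure ℝ := volume.restrict (Set.Ico (0 : ℝ) 1)

/-- The Hilbert space `H = L²([0,1))`. -/
noncomputable abbrev Hsp : Type := Lp ℝ 2 mu0

/-- The cone `C ⊂ H` of (classes of) functions with a nondecreasing nonnegative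
representative on `[0,1)`. -/
def coneC : Set Hsp :=
  {f | ∃ g : ℝ → ℝ, MonotoneOn g (Set.Ico 0 1) ∧ (∀ x ∈ Set.Ico (0 : ℝ) 1, 0 ≤ g x) ∧
    (f : ℝ → ℝ) =ᵐ[mu0] g}

/-- The dual cone `C*` of `C` in `H`. -/
noncomputable def dualC : Set Hsp := {ι | ∀ ρ ∈ coneC, 0 ≤ inner (𝕜 := ℝ) ι ρ}

/-- The regularized nonlinearity `𝖧(ι) = inf { ∫₀¹ ξ̄(ν(s)) ds : ν ∈ C, ν - ι ∈ C* }`,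
valued in `ℝ ∪ {+∞}` (the infimum of the empty set being `+∞`). -/
noncomputable def HH (ξb : ℝ → ℝ) (ι : Hsp) : EReal :=
  sInf {x : EReal | ∃ ν ∈ coneC, ν - ι ∈ dualC ∧ x = ((∫ s, ξb (ν s) ∂mu0 : ℝ) : EReal)}

instance : IsFiniteMeasure mu0 := by
  constructor
  simp [mu0, Real.volume_Ico]


/-- The left derivative (sup of left slopes). -/
noncomputable def lderiv (f : ℝ → ℝ) (a : ℝ) : ℝ :=
  sSup ((fun x => (f x - f a) / (x - a)) '' Set.Iio a)

section lderiv
variable {f : ℝ → ℝ} {K : NNReal}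

lemma slope_le_K (hlip : LipschitzWith K f) {x a : ℝ} (hxa : x ≠ a) :
    (f x - f a) / (x - a) ≤ K := by
  have h := hlip.dist_le_mul x a
  rw [Real.dist_eq, Real.dist_eq] at h
  have hne : |x - a| > 0 := abs_pos.mpr (sub_ne_zero.mpr hxa)
  calc (f x - f a) / (x - a) ≤ |(f x - f a) / (x - a)| := le_abs_self _
    _ = |f x - f a| / |x - a| := abs_div _ _
    _ ≤ K := (div_le_iff₀ hne).mpr h

lemma slope_nonneg (hmono : Monotone f) {x a : ℝ} (hxa : x < a) :
    0 ≤ (f x - f a) / (x - a) := by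
  rw [div_nonneg_iff]
  right
  constructor
  · have := hmono hxa.le; linarith
  · linarith

lemma lderiv_nonneg (hmono : Monotone f) (hlip : LipschitzWith K f) (a : ℝ) :
    0 ≤ lderiv f a := by
  refine le_trans (slope_nonneg hmono (show a - 1 < a by linarith)) ?_
  apply le_csSup
  · exact ⟨K, by rintro y ⟨x, (hx : x < a), rfl⟩; exact slope_le_K hlip (ne_of_lt hx)⟩
  · exact ⟨a - 1, by simp, rfl⟩

lemma lderiv_le_K (hlip : LipschitzWith K f) (a : ℝ) : lderiv f a ≤ K := by
  apply csSup_le ((Set.nonempty_Iio).image _)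
  rintro y ⟨x, (hx : x < a), rfl⟩; exact slope_le_K hlip (ne_of_lt hx)

lemma lderiv_subgrad (hconv : ConvexOn ℝ Set.univ f) (hlip : LipschitzWith K f) (a b : ℝ) :
    f a + lderiv f a * (b - a) ≤ f b := by
  have hbdd : BddAbove ((fun x => (f x - f a) / (x - a)) '' Set.Iio a) :=
    ⟨K, by rintro y ⟨x, (hx : x < a), rfl⟩; exact slope_le_K hlip (ne_of_lt hx)⟩
  rcases lt_trichotomy b a with h | rfl | h
  · have hmem : (f b - f a) / (b - a) ≤ lderiv f a :=
      le_csSup hbdd ⟨b, h, rfl⟩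
    have hba : b - a < 0 := by linarith
    nlinarith [mul_le_mul_of_nonpos_right hmem hba.le,
      div_mul_cancel₀ (f b - f a) (show b - a ≠ 0 by linarith)]
  · simp
  · have hle : lderiv f a ≤ (f b - f a) / (b - a) := by
      apply csSup_le ((Set.nonempty_Iio).image _)
      rintro y ⟨x, (hx : x < a), rfl⟩
      exact hconv.secant_mono trivial trivial trivial (ne_of_lt hx) (ne_of_gt h) (by linarith)
    have hba : 0 < b - a := by linarith
    nlinarith [mul_le_mul_of_nonneg_right hle hba.le,
      div_mul_cancel₀ (f b - f a) (show b - a ≠ 0 by linarith)]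

lemma lderiv_mono (hconv : ConvexOn ℝ Set.univ f) (hlip : LipschitzWith K f) :
    Monotone (lderiv f) := by
  intro a a' haa'
  rcases eq_or_lt_of_le haa' with rfl | h
  · exact le_rfl
  apply csSup_le ((Set.nonempty_Iio).image _)
  rintro y ⟨x, (hx : x < a), rfl⟩
  have h1 : (f x - f a) / (x - a) ≤ (f x - f a') / (x - a') := by
    have := hconv.secant_mono (a := x) trivial trivial trivial (ne_of_gt hx) (ne_of_gt (hx.trans h)) h.le
    -- (f a - f x)/(a - x) ≤ (f a' - f x)/(a' - x)
    rw [show (f x - f a) / (x - a) = (f a - f x) / (a - x) by rw [← neg_div_neg_eq]; ring_nf,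
        show (f x - f a') / (x - a') = (f a' - f x) / (a' - x) by rw [← neg_div_neg_eq]; ring_nf]
    exact this
  refine h1.trans (le_csSup ?_ ⟨x, hx.trans h, rfl⟩)
  exact ⟨K, by rintro y ⟨z, (hz : z < a'), rfl⟩; exact slope_le_K hlip (ne_of_lt hz)⟩

end lderiv

section main

lemma integrable_of_Hsp (f : Lp ℝ 2 mu0) : Integrable (fun s => f s) mu0 :=
  memLp_one_iff_integrable.mp ((Lp.memLp f).mono_exponent (by norm_num))

lemma integrable_comp {K : NNReal} {ξb : ℝ → ℝ} (hlipK : LipschitzWith K ξb)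
    (f : Lp ℝ 2 mu0) : Integrable (fun s => ξb (f s)) mu0 := by
  have hIf := integrable_of_Hsp f
  refine Integrable.mono' ((integrable_const |ξb 0|).add (hIf.norm.const_mul K))
    (hlipK.continuous.comp_aestronglyMeasurable (Lp.aestronglyMeasurable f)) ?_
  filter_upwards with s
  have h := hlipK.dist_le_mul (f s) 0
  rw [Real.dist_eq, Real.dist_eq, sub_zero] at h
  have : |ξb (f s)| ≤ |ξb 0| + |ξb (f s) - ξb 0| := by
    have := abs_sub_abs_le_abs_sub (ξb (f s)) (ξb 0); linarith
  simpa [Real.norm_eq_abs] using this.trans (by linarith)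

end main

theorem stmt11 (ξ ξb : ℝ → ℝ) (hlip : ∃ K : NNReal, LipschitzWith K ξb)
    (hmono : Monotone ξb) (hbdd : ∃ c : ℝ, ∀ r : ℝ, c ≤ ξb r)
    (hconv : ConvexOn ℝ Set.univ ξb)
    (heq : ∀ r ∈ Set.Icc (0 : ℝ) 1, ξb r = ξ r)
    (μ : Hsp) (hμ : μ ∈ coneC)
    (hrange : ∀ᵐ s ∂mu0, μ s ∈ Set.Icc (0 : ℝ) 1) :
    HH ξb μ = ((∫ s, ξ (μ s) ∂mu0 : ℝ) : EReal) := by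
  obtain ⟨K, hlipK⟩ := hlip
  obtain ⟨g, hgmono, hgnn, hgae⟩ := hμ
  have hint_eq : ∫ s, ξb (μ s) ∂mu0 = ∫ s, ξ (μ s) ∂mu0 :=
    integral_congr_ae (hrange.mono fun s hs => heq _ hs)
  set d := lderiv ξb with hd
  have dmono : Monotone d := lderiv_mono hconv hlipK
  have dnn : ∀ a, 0 ≤ d a := lderiv_nonneg hmono hlipK
  have dK : ∀ a, d a ≤ K := lderiv_le_K hlipK
  have dmeas : AEStronglyMeasurable (fun s => d (μ s)) mu0 :=
    (dmono.measurable.comp_aemeasurable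
      (Lp.aestronglyMeasurable μ).aemeasurable).aestronglyMeasurable
  have ρmem : MemLp (fun s => d (μ s)) 2 mu0 := by
    refine MemLp.of_bound dmeas K ?_
    filter_upwards with s
    rw [Real.norm_eq_abs, abs_of_nonneg (dnn _)]
    exact dK _
  set ρ : Hsp := ρmem.toLp _ with hρ
  have hρcone : ρ ∈ coneC := by
    refine ⟨d ∘ g, fun x hx y hy hxy => dmono (hgmono hx hy hxy), fun x _ => dnn _, ?_⟩
    exact ρmem.coeFn_toLp.trans (hgae.mono fun s hs => by simp [Function.comp, hs])
  have hinner : ∀ ν : Hsp, inner (𝕜 := ℝ) (ν - μ) ρ = ∫ s, (ν s - μ s) * d (μ s) ∂mu0 := by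
    intro ν
    rw [MeasureTheory.L2.inner_def]
    refine integral_congr_ae ?_
    filter_upwards [Lp.coeFn_sub ν μ, ρmem.coeFn_toLp] with s h1 h2
    rw [h1, Pi.sub_apply, h2, RCLike.inner_apply', starRingEnd_apply, star_trivial]
  refine le_antisymm ?_ ?_
  · -- upper bound: take ν = μ
    refine sInf_le ⟨μ, ⟨g, hgmono, hgnn, hgae⟩, ?_, by rw [hint_eq]⟩
    intro ρ' _
    rw [sub_self]
    simp
  · -- lower bound
    refine le_sInf ?_
    rintro x ⟨ν, hν, hdual, rfl⟩
    rw [← hint_eq, EReal.coe_le_coe_iff]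
    -- integrability facts
    have hI1 : Integrable (fun s => ξb (ν s)) mu0 := integrable_comp hlipK ν
    have hI2 : Integrable (fun s => ξb (μ s)) mu0 := integrable_comp hlipK μ
    have hI3 : Integrable (fun s => (ν s - μ s) * d (μ s)) mu0 := by
      refine Integrable.mono' (((integrable_of_Hsp ν).sub (integrable_of_Hsp μ)).norm.mul_const K)
        (((Lp.aestronglyMeasurable ν).sub (Lp.aestronglyMeasurable μ)).mul dmeas) ?_
      filter_upwards with s
      rw [Real.norm_eq_abs, abs_mul, abs_of_nonneg (dnn _)]
      exact mul_le_mul_of_nonneg_left (dK _) (abs_nonneg _)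
    have hpos : 0 ≤ ∫ s, (ν s - μ s) * d (μ s) ∂mu0 := by
      rw [← hinner ν]; exact hdual ρ hρcone
    have hkey : (∫ s, ξb (μ s) ∂mu0) + ∫ s, (ν s - μ s) * d (μ s) ∂mu0
        ≤ ∫ s, ξb (ν s) ∂mu0 := by
      rw [← integral_add hI2 hI3]
      refine integral_mono_ae (hI2.add hI3) hI1 ?_
      filter_upwards with s
      have := lderiv_subgrad hconv hlipK (μ s) (ν s)
      simp only [← hd] at this
      nlinarith [this]
    linarith
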